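/- Let F3 = [[1,1,0],[1,0,1],[1,1,1]] and G24 = F3 ⊗ F8 (a 24×24 GF(2) matrix). Let T1 be the 24×24 block-diagonal matrix diag(I8, I8, T) with T the 8×8 convolution matrix from Proposition 1. Then the rows of T1·G24 indexed by A1 = {4,6,7,8,12,14,15,16,18,19,20,24} generate the (24,12,8) extended Golay code given by [[G8,G8,0],[G8,0,G8],[G8',G8',G8']]. -/

import Mathlib

open Matrix

/-- Generator matrix of the (8,4,4) Reed–Muller code. -/
def G8 : Matrix (Fin 4) (Fin 8) (ZMod 2) :=
  !![1,1,1,1,0,0,0,0; 1,1,0,0,1,1,0,0; 1,0,1,0,1,0,1,0; 1,1,1,1,1,1,1,1]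

/-- Column-permuted copy of G8 (permutation π3). -/
def G8' : Matrix (Fin 4) (Fin 8) (ZMod 2) :=
  !![0,1,1,1,1,0,0,0; 1,0,0,1,1,1,0,0; 1,1,0,0,1,0,1,0; 1,1,1,1,1,1,1,1]

/-- Assemble a 12×24 matrix from a 3×3 array of 4×8 blocks. -/
def build (M : Fin 3 → Fin 3 → Matrix (Fin 4) (Fin 8) (ZMod 2)) :
    Matrix (Fin 12) (Fin 24) (ZMod 2) :=
  Matrix.of fun i j =>
    M ⟨i.1 / 4, by have := i.2; omega⟩ ⟨j.1 / 8, by have := j.2; omega⟩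
      ⟨i.1 % 4, by omega⟩ ⟨j.1 % 8, by omega⟩

/-- Assemble a 24×24 matrix from a 3×3 array of 8×8 blocks. -/
def build8 (M : Fin 3 → Fin 3 → Matrix (Fin 8) (Fin 8) (ZMod 2)) :
    Matrix (Fin 24) (Fin 24) (ZMod 2) :=
  Matrix.of fun i j =>
    M ⟨i.1 / 8, by have := i.2; omega⟩ ⟨j.1 / 8, by have := j.2; omega⟩
      ⟨i.1 % 8, by omega⟩ ⟨j.1 % 8, by omega⟩

/-- The binary linear code generated by (the rows of) a matrix. -/
def code {k n : ℕ} (M : Matrix (Fin k) (Fin n) (ZMod 2)) :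
    Submodule (ZMod 2) (Fin n → ZMod 2) :=
  LinearMap.range M.vecMulLinear

/-- The cubing-construction generator matrix of the (24,12,8) extended Golay code. -/
def Ghat : Matrix (Fin 12) (Fin 24) (ZMod 2) :=
  build ![![G8, 0, G8], ![0, G8, G8], ![G8', G8', G8']]

/-- The 2×2 polar kernel. -/
def F2k : Matrix (Fin 2) (Fin 2) (ZMod 2) := !![1,0; 1,1]

/-- F8 = F2 ⊗ F2 ⊗ F2 (Kronecker product), written entrywise. -/
def F8 : Matrix (Fin 8) (Fin 8) (ZMod 2) :=
  Matrix.of fun i j =>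
    F2k ⟨i.1 / 4, by have := i.2; omega⟩ ⟨j.1 / 4, by have := j.2; omega⟩ *
    F2k ⟨i.1 / 2 % 2, by omega⟩ ⟨j.1 / 2 % 2, by omega⟩ *
    F2k ⟨i.1 % 2, by omega⟩ ⟨j.1 % 2, by omega⟩

/-- The 8×8 convolution matrix T of Proposition 1: identity plus extra ones at
(one-based) positions (2,3), (2,7), (3,4), (3,6), (4,5). -/
def T8 : Matrix (Fin 8) (Fin 8) (ZMod 2) :=
  Matrix.of fun i j =>
    if i = j ∨ (i = 1 ∧ j = 2) ∨ (i = 1 ∧ j = 6) ∨ (i = 2 ∧ j = 3) ∨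
       (i = 2 ∧ j = 5) ∨ (i = 3 ∧ j = 4) then 1 else 0

def F3a : Matrix (Fin 3) (Fin 3) (ZMod 2) := !![1,1,0; 1,0,1; 1,1,1]

/-- G24 = F3 ⊗ F8 for Kernel 1. -/
def G24a : Matrix (Fin 24) (Fin 24) (ZMod 2) :=
  Matrix.of fun i j =>
    F3a ⟨i.1 / 8, by have := i.2; omega⟩ ⟨j.1 / 8, by have := j.2; omega⟩ *
    F8 ⟨i.1 % 8, by omega⟩ ⟨j.1 % 8, by omega⟩

/-- T1 = diag(I8, I8, T). -/
def T1 : Matrix (Fin 24) (Fin 24) (ZMod 2) :=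
  build8 ![![1, 0, 0], ![0, 1, 0], ![0, 0, T8]]

set_option maxHeartbeats 2000000 in
/-- The rows of T1·G24 indexed by A1 (one-based {4,6,7,8,12,14,15,16,18,19,20,24})
generate the extended Golay code [[G8,G8,0],[G8,0,G8],[G8',G8',G8']]. -/
theorem kernel1_golay :
    Submodule.span (ZMod 2)
      ((fun i => (T1 * G24a) i) ''
        ({3, 5, 6, 7, 11, 13, 14, 15, 17, 18, 19, 23} : Set (Fin 24))) =
    code (build ![![G8, G8, 0], ![G8, 0, G8], ![G8', G8', G8']]) := by
  have key : ∀ p : Fin 12,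
      (T1 * G24a) (![3,5,6,7,11,13,14,15,19,18,17,23] p) =
      (build ![![G8, G8, 0], ![G8, 0, G8], ![G8', G8', G8']]) p := by
    intro p; fin_cases p <;> decide
  rw [code, range_vecMulLinear]
  congr 1
  ext v
  simp only [Set.mem_image, Set.mem_insert_iff, Set.mem_singleton_iff, Set.mem_range]
  constructor
  · rintro ⟨i, hi, rfl⟩
    rcases hi with rfl|rfl|rfl|rfl|rfl|rfl|rfl|rfl|rfl|rfl|rfl|rfl
    exacts [⟨0, (key 0).symm⟩, ⟨1, (key 1).symm⟩, ⟨2, (key 2).symm⟩,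
      ⟨3, (key 3).symm⟩, ⟨4, (key 4).symm⟩, ⟨5, (key 5).symm⟩,
      ⟨6, (key 6).symm⟩, ⟨7, (key 7).symm⟩, ⟨10, (key 10).symm⟩,
      ⟨9, (key 9).symm⟩, ⟨8, (key 8).symm⟩, ⟨11, (key 11).symm⟩]
  · rintro ⟨j, rfl⟩
    fin_cases j <;> exact ⟨_, by decide, key _⟩
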